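/- Let X be a complete CAT(0) space, let x₁,…,xₙ be finitely many points of X and r₁,…,rₙ positive numbers. Then μ' := inf{μ > 0 : ⋂ᵢ₌₁ⁿ B̄(xᵢ, μrᵢ) ≠ ∅} is finite, the intersection ⋂ᵢ₌₁ⁿ B̄(xᵢ, μ'rᵢ) consists of exactly one point m, and m lies in the closure of the convex hull of F' := {xᵢ : d(m,xᵢ) = μ'rᵢ}. -/

import Mathlib

/-- `γ` is a geodesic from `x` to `y`: an isometric embedding of `[0, dist x y]`
with `γ 0 = x` and `γ (dist x y) = y`. -/
def IsGeodesicFrom {X : Type*} [MetricSpace X] (x y : X) (γ : ℝ → X) : Prop :=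
  γ 0 = x ∧ γ (dist x y) = y ∧
    ∀ s ∈ Set.Icc (0:ℝ) (dist x y), ∀ t ∈ Set.Icc (0:ℝ) (dist x y),
      dist (γ s) (γ t) = |s - t|

/-- A metric space is geodesic if every pair of points is joined by a geodesic. -/
def GeodesicSpace (X : Type*) [MetricSpace X] : Prop :=
  ∀ x y : X, ∃ γ : ℝ → X, IsGeodesicFrom x y γ

/-- The point at arclength `t` on the Euclidean segment from `a` to `b`. -/
noncomputable def cmpPt (a b : EuclideanSpace ℝ (Fin 2)) (t : ℝ) :
    EuclideanSpace ℝ (Fin 2) :=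
  AffineMap.lineMap a b (t / dist a b)

/-- A geodesic metric space is CAT(0) if every geodesic triangle satisfies the
comparison inequality with respect to any comparison triangle in the Euclidean
plane: any two points on the sides of the triangle are at distance at most the
distance of the corresponding points (at the same arclength parameters) on the
comparison triangle. -/
def IsCAT0 (X : Type*) [MetricSpace X] : Prop :=
  GeodesicSpace X ∧
  ∀ (x₁ x₂ x₃ : X) (γ₁₂ γ₁₃ γ₂₃ : ℝ → X),
    IsGeodesicFrom x₁ x₂ γ₁₂ → IsGeodesicFrom x₁ x₃ γ₁₃ → IsGeodesicFrom x₂ x₃ γ₂₃ →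
    ∀ (y₁ y₂ y₃ : EuclideanSpace ℝ (Fin 2)),
      dist y₁ y₂ = dist x₁ x₂ → dist y₁ y₃ = dist x₁ x₃ → dist y₂ y₃ = dist x₂ x₃ →
      (∀ s ∈ Set.Icc (0:ℝ) (dist x₁ x₂), ∀ t ∈ Set.Icc (0:ℝ) (dist x₁ x₂),
        dist (γ₁₂ s) (γ₁₂ t) ≤ dist (cmpPt y₁ y₂ s) (cmpPt y₁ y₂ t)) ∧
      (∀ s ∈ Set.Icc (0:ℝ) (dist x₁ x₃), ∀ t ∈ Set.Icc (0:ℝ) (dist x₁ x₃),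
        dist (γ₁₃ s) (γ₁₃ t) ≤ dist (cmpPt y₁ y₃ s) (cmpPt y₁ y₃ t)) ∧
      (∀ s ∈ Set.Icc (0:ℝ) (dist x₂ x₃), ∀ t ∈ Set.Icc (0:ℝ) (dist x₂ x₃),
        dist (γ₂₃ s) (γ₂₃ t) ≤ dist (cmpPt y₂ y₃ s) (cmpPt y₂ y₃ t)) ∧
      (∀ s ∈ Set.Icc (0:ℝ) (dist x₁ x₂), ∀ t ∈ Set.Icc (0:ℝ) (dist x₁ x₃),
        dist (γ₁₂ s) (γ₁₃ t) ≤ dist (cmpPt y₁ y₂ s) (cmpPt y₁ y₃ t)) ∧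
      (∀ s ∈ Set.Icc (0:ℝ) (dist x₁ x₂), ∀ t ∈ Set.Icc (0:ℝ) (dist x₂ x₃),
        dist (γ₁₂ s) (γ₂₃ t) ≤ dist (cmpPt y₁ y₂ s) (cmpPt y₂ y₃ t)) ∧
      (∀ s ∈ Set.Icc (0:ℝ) (dist x₁ x₃), ∀ t ∈ Set.Icc (0:ℝ) (dist x₂ x₃),
        dist (γ₁₃ s) (γ₂₃ t) ≤ dist (cmpPt y₁ y₃ s) (cmpPt y₂ y₃ t))

/-- A subset of a metric space is (geodesically) convex if every geodesic
between two of its points lies in it. -/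
def GeodesicConvex {X : Type*} [MetricSpace X] (A : Set X) : Prop :=
  ∀ x ∈ A, ∀ y ∈ A, ∀ γ : ℝ → X, IsGeodesicFrom x y γ →
    ∀ t ∈ Set.Icc (0:ℝ) (dist x y), γ t ∈ A

/-- The (geodesic) convex hull: the intersection of all convex sets containing `A`. -/
def geodConvexHull {X : Type*} [MetricSpace X] (A : Set X) : Set X :=
  ⋂₀ {C : Set X | GeodesicConvex C ∧ A ⊆ C}


open Metric Set

lemma e2_dist_sq (u v : EuclideanSpace ℝ (Fin 2)) :
    dist u v ^ 2 = (u 0 - v 0)^2 + (u 1 - v 1)^2 := by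
  rw [EuclideanSpace.dist_eq, Real.sq_sqrt (by positivity)]
  simp [Fin.sum_univ_two, Real.dist_eq, sq_abs]

lemma lineMap_dist_sq (y₁ y₂ y₃ : EuclideanSpace ℝ (Fin 2)) (s : ℝ) :
    dist y₁ (AffineMap.lineMap y₂ y₃ s) ^ 2
      = (1-s) * dist y₁ y₂ ^ 2 + s * dist y₁ y₃ ^ 2 - s*(1-s)*dist y₂ y₃ ^ 2 := by
  have h : (AffineMap.lineMap y₂ y₃ s : EuclideanSpace ℝ (Fin 2)) = y₂ + s • (y₃ - y₂) := by
    simp [AffineMap.lineMap_apply, vsub_eq_sub, vadd_eq_add]; abel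
  have h0 : (AffineMap.lineMap y₂ y₃ s : EuclideanSpace ℝ (Fin 2)) 0 = y₂ 0 + s * (y₃ 0 - y₂ 0) := by
    rw [h]; simp [PiLp.add_apply, PiLp.smul_apply, PiLp.sub_apply]
  have h1 : (AffineMap.lineMap y₂ y₃ s : EuclideanSpace ℝ (Fin 2)) 1 = y₂ 1 + s * (y₃ 1 - y₂ 1) := by
    rw [h]; simp [PiLp.add_apply, PiLp.smul_apply, PiLp.sub_apply]
  rw [e2_dist_sq, e2_dist_sq, e2_dist_sq, e2_dist_sq, h0, h1]; ring

lemma dist_eq_of_sq_eq {u v : EuclideanSpace ℝ (Fin 2)} {c : ℝ} (hc : 0 ≤ c)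
    (h : dist u v ^ 2 = c ^ 2) : dist u v = c := by
  nlinarith [dist_nonneg (x := u) (y := v)]

lemma exists_cmp_tri {X : Type*} [MetricSpace X] (x₁ x₂ x₃ : X) :
    ∃ y₁ y₂ y₃ : EuclideanSpace ℝ (Fin 2),
      dist y₁ y₂ = dist x₁ x₂ ∧ dist y₁ y₃ = dist x₁ x₃ ∧ dist y₂ y₃ = dist x₂ x₃ := by
  set a := dist x₁ x₂ with ha
  set b := dist x₁ x₃ with hb
  set c := dist x₂ x₃ with hc
  have ha0 : 0 ≤ a := dist_nonneg
  have hb0 : 0 ≤ b := dist_nonneg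
  have hc0 : 0 ≤ c := dist_nonneg
  have t1 : c ≤ a + b := by rw [ha, hb, hc, dist_comm x₁ x₂]; exact dist_triangle _ _ _
  have t2 : b ≤ a + c := by rw [ha, hb, hc]; exact dist_triangle _ _ _
  have t3 : a ≤ b + c := by rw [ha, hb, hc, dist_comm x₂ x₃]; exact dist_triangle _ _ _
  rcases eq_or_lt_of_le ha0 with h | hapos
  · -- a = 0, x₁ = x₂, so b = c
    have hx : x₁ = x₂ := dist_eq_zero.mp (ha.symm.trans h.symm)
    have hbc : b = c := by rw [hb, hc, hx]
    refine ⟨!₂[0,0], !₂[0,0], !₂[b,0], ?_, ?_, ?_⟩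
    · apply dist_eq_of_sq_eq (le_of_eq h); rw [e2_dist_sq]; norm_num [Matrix.cons_val_zero, Matrix.cons_val_one]
      rw [← h]; ring
    · apply dist_eq_of_sq_eq hb0; rw [e2_dist_sq]; norm_num [Matrix.cons_val_zero, Matrix.cons_val_one]
    · apply dist_eq_of_sq_eq hc0; rw [e2_dist_sq]; norm_num [Matrix.cons_val_zero, Matrix.cons_val_one]
      rw [← hbc]
  · set p := (a^2 + b^2 - c^2)/(2*a) with hp
    have hq0 : 0 ≤ b^2 - p^2 := by
      have key : b^2*(2*a)^2 - (a^2+b^2-c^2)^2 = (a+b-c)*((a+b+c)*((c+b-a)*(c+a-b))) := by ring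
      have hnn : 0 ≤ (a+b-c)*((a+b+c)*((c+b-a)*(c+a-b))) := by
        apply mul_nonneg (by linarith)
        apply mul_nonneg (by linarith)
        exact mul_nonneg (by linarith) (by linarith)
      rw [hp, div_pow, sub_nonneg, div_le_iff₀ (by positivity)]
      nlinarith [key, hnn]
    set q := Real.sqrt (b^2 - p^2) with hqdef
    have hqsq : q^2 = b^2 - p^2 := Real.sq_sqrt hq0
    refine ⟨!₂[0,0], !₂[a,0], !₂[p,q], ?_, ?_, ?_⟩
    · apply dist_eq_of_sq_eq ha0; rw [e2_dist_sq]; norm_num [Matrix.cons_val_zero, Matrix.cons_val_one]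
    · apply dist_eq_of_sq_eq hb0; rw [e2_dist_sq]
      norm_num [Matrix.cons_val_zero, Matrix.cons_val_one]
      nlinarith [hqsq]
    · apply dist_eq_of_sq_eq hc0; rw [e2_dist_sq]
      norm_num [Matrix.cons_val_zero, Matrix.cons_val_one]
      have : p * (2*a) = a^2 + b^2 - c^2 := by rw [hp]; field_simp
      nlinarith [hqsq]


lemma cat0_cn {X : Type*} [MetricSpace X] (hX : IsCAT0 X) (q a b : X) {γ : ℝ → X}
    (hγ : IsGeodesicFrom a b γ) {s : ℝ} (hs0 : 0 ≤ s) (hs1 : s ≤ 1) :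
    dist q (γ (s * dist a b)) ^ 2
      ≤ (1-s) * dist q a ^ 2 + s * dist q b ^ 2 - s*(1-s) * dist a b ^ 2 := by
  rcases eq_or_lt_of_le (dist_nonneg : (0:ℝ) ≤ dist a b) with hD | hD
  · -- degenerate: a = b
    have hab : a = b := dist_eq_zero.mp hD.symm
    have h0 : γ (s * dist a b) = a := by rw [← hD, mul_zero]; exact hγ.1
    rw [h0, ← hD, hab]
    have : dist q b ^ 2 = dist q b ^ 2 := rfl
    nlinarith [sq_nonneg (dist q b)]
  · obtain ⟨γqa, hγqa⟩ := hX.1 q a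
    obtain ⟨γqb, hγqb⟩ := hX.1 q b
    obtain ⟨y₁, y₂, y₃, e12, e13, e23⟩ := exists_cmp_tri q a b
    have key := (hX.2 q a b γqa γqb γ hγqa hγqb hγ y₁ y₂ y₃ e12 e13 e23).2.2.2.2.1
    have hmem0 : (0:ℝ) ∈ Set.Icc (0:ℝ) (dist q a) := ⟨le_refl _, dist_nonneg⟩
    have hmemt : s * dist a b ∈ Set.Icc (0:ℝ) (dist a b) :=
      ⟨mul_nonneg hs0 hD.le, by nlinarith⟩
    have h1 := key 0 hmem0 (s * dist a b) hmemt
    rw [hγqa.1] at h1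
    have hc0 : cmpPt y₁ y₂ 0 = y₁ := by
      rw [cmpPt, zero_div, AffineMap.lineMap_apply_zero]
    have hc1 : cmpPt y₂ y₃ (s * dist a b) = AffineMap.lineMap y₂ y₃ s := by
      rw [cmpPt, e23, mul_div_assoc, div_self hD.ne', mul_one]
    rw [hc0, hc1] at h1
    have h2 : dist q (γ (s * dist a b)) ^ 2 ≤ dist y₁ (AffineMap.lineMap y₂ y₃ s) ^ 2 :=
      pow_le_pow_left₀ dist_nonneg h1 2
    rw [lineMap_dist_sq, e12, e13, e23] at h2
    exact h2

lemma le_of_sq_le_sq' {a b : ℝ} (ha : 0 ≤ a) (hb : 0 ≤ b) (h : a^2 ≤ b^2) : a ≤ b := by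
  nlinarith

lemma lt_of_sq_lt_sq' {a b : ℝ} (ha : 0 ≤ a) (hb : 0 ≤ b) (h : a^2 < b^2) : a < b := by
  nlinarith

lemma sq_lt_sq_of_lt {a b : ℝ} (ha : 0 ≤ a) (h : a < b) : a^2 < b^2 := by nlinarith

lemma eq_zero_of_sq_nonpos {a : ℝ} (h0 : 0 ≤ a) (h : a^2 ≤ 0) : a = 0 := by nlinarith

lemma aux_nonneg {a b c : ℝ} (h : 0 ≤ a) (h2 : a ≤ b*c) (h3 : 0 < c) : 0 ≤ b := by
  nlinarith

lemma arith1 {σ d B Dmp A L : ℝ} (hσ0 : 0 < σ) (hσh : σ ≤ 1/2)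
    (h4σB : σ*(4*B^2) ≤ d^2) (hd0 : 0 < d) (hA0 : 0 ≤ A) (hAB : A ≤ B)
    (hDsq : Dmp^2 < d^2 + σ*d^2/4)
    (hI : σ*(1-σ)*L^2 ≤ (1-σ)*Dmp^2 + σ*A^2 - d^2) : L^2 < A^2 := by
  have h1σ : (0:ℝ) < 1 - σ := by linarith
  have c1 : (1-σ)*Dmp^2 < (1-σ)*(d^2 + σ*d^2/4) := by nlinarith
  have c2 : σ*(1-σ)*L^2 < σ*A^2 - (3:ℝ)/4*(σ*d^2) := by
    nlinarith [mul_nonneg (mul_nonneg hσ0.le hσ0.le) (sq_nonneg d)]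
  have hA2B2 : A^2 ≤ B^2 := by nlinarith
  have c3 : σ*A^2 ≤ d^2/4 := by nlinarith [mul_le_mul_of_nonneg_left hA2B2 hσ0.le]
  have c4 : σ*((1-σ)*L^2) < σ*((1-σ)*A^2) := by
    nlinarith [mul_le_mul_of_nonneg_left c3 hσ0.le, mul_nonneg hσ0.le (sq_nonneg d),
      mul_pos hσ0 (pow_pos hd0 2)]
  have c5 : (1-σ)*L^2 < (1-σ)*A^2 := lt_of_mul_lt_mul_left c4 hσ0.le
  exact lt_of_mul_lt_mul_left c5 h1σ.le

lemma arith2 {s Dmp A L DZ : ℝ} (hs0 : 0 < s) (hs1 : s ≤ 1) (hL : L^2 < A^2)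
    (h4 : DZ^2 ≤ (1-s)*A^2 + s*L^2 - s*(1-s)*Dmp^2) : DZ^2 < A^2 := by
  nlinarith [mul_nonneg (mul_nonneg hs0.le (by linarith : (0:ℝ) ≤ 1-s)) (sq_nonneg Dmp),
    mul_lt_mul_of_pos_left hL hs0]

set_option maxHeartbeats 1600000 in
theorem stmt2 {X : Type*} [MetricSpace X] [CompleteSpace X] (hX : IsCAT0 X)
    {n : ℕ} (hn : 0 < n) (x : Fin n → X) (r : Fin n → ℝ) (hr : ∀ i, 0 < r i) :
    {μ : ℝ | 0 < μ ∧ (⋂ i, Metric.closedBall (x i) (μ * r i)).Nonempty}.Nonempty ∧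
    ∃ m : X,
      (⋂ i, Metric.closedBall (x i)
          (sInf {μ : ℝ | 0 < μ ∧ (⋂ j, Metric.closedBall (x j) (μ * r j)).Nonempty} * r i))
        = {m} ∧
      m ∈ closure (geodConvexHull {p : X | ∃ i, p = x i ∧
        dist m (x i) =
          sInf {μ : ℝ | 0 < μ ∧ (⋂ j, Metric.closedBall (x j) (μ * r j)).Nonempty} * r i}) := by
  haveI : Nonempty (Fin n) := ⟨⟨0, hn⟩⟩
  have i₀ : Fin n := ⟨0, hn⟩
  set S : Set ℝ := {μ : ℝ | 0 < μ ∧ (⋂ j, Metric.closedBall (x j) (μ * r j)).Nonempty} with hSdef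
  have hmem : ∀ (c : ℝ) (z : X), z ∈ (⋂ j, Metric.closedBall (x j) (c * r j)) ↔
      ∀ i, dist (x i) z ≤ c * r i := by
    intro c z
    simp only [Set.mem_iInter, Metric.mem_closedBall]
    constructor
    · intro h i; rw [dist_comm]; exact h i
    · intro h i; rw [dist_comm]; exact h i
  set R : ℝ := 1 + ∑ i, r i with hRdef
  have hrsum : ∀ i, r i ≤ ∑ j, r j := fun i =>
    Finset.single_le_sum (fun j _ => (hr j).le) (Finset.mem_univ i)
  have hR0 : 0 < R := by
    have h1 : (0:ℝ) ≤ ∑ i, r i := Finset.sum_nonneg fun i _ => (hr i).le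
    rw [hRdef]; linarith
  have hR2 : (0:ℝ) < 4 * R^2 := mul_pos (by norm_num) (pow_pos hR0 2)
  have hrR : ∀ i, r i ≤ R := fun i => by have := hrsum i; simp only [hRdef]; linarith
  have hS_ne : S.Nonempty := by
    refine ⟨1 + ∑ i, dist (x i₀) (x i) / r i, ?_, ⟨x i₀, (hmem _ _).mpr fun i => ?_⟩⟩
    · have : (0:ℝ) ≤ ∑ i, dist (x i₀) (x i) / r i :=
        Finset.sum_nonneg fun i _ => div_nonneg dist_nonneg (hr i).le
      · linarith
    · have h1 : dist (x i₀) (x i) / r i ≤ ∑ j, dist (x i₀) (x j) / r j :=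
        Finset.single_le_sum (fun j _ => div_nonneg dist_nonneg (hr j).le) (Finset.mem_univ i)
      have h2 : dist (x i₀) (x i) / r i ≤ 1 + ∑ j, dist (x i₀) (x j) / r j := by linarith
      rw [div_le_iff₀ (hr i)] at h2
      rw [dist_comm]
      linarith [h2]
  have hbdd : BddBelow S := ⟨0, fun μ hμ => hμ.1.le⟩
  set μ' : ℝ := sInf S with hμ'def
  have hμ'0 : 0 ≤ μ' := le_csInf hS_ne fun μ hμ => hμ.1.le
  have hle : ∀ μ ∈ S, μ' ≤ μ := fun μ h => csInf_le hbdd h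
  have h_up : ∀ {μ ν : ℝ}, μ ∈ S → μ ≤ ν → ν ∈ S := by
    rintro μ ν ⟨hμ0, z, hz⟩ hμν
    refine ⟨lt_of_lt_of_le hμ0 hμν, z, (hmem _ _).mpr fun i => ?_⟩
    exact le_trans ((hmem _ _).mp hz i) (mul_le_mul_of_nonneg_right hμν (hr i).le)
  have h_gt : ∀ ν, μ' < ν → ν ∈ S := by
    intro ν hν
    obtain ⟨μ, hμS, hμν⟩ := (csInf_lt_iff hbdd hS_ne).mp hν
    exact h_up hμS hμν.le
  -- diameter bound
  have h_diam : ∀ (μ : ℝ) (u v : X), (∀ i, dist (x i) u ≤ μ * r i) →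
      (∀ i, dist (x i) v ≤ μ * r i) → dist u v ^ 2 ≤ 4 * R^2 * (μ^2 - μ'^2) := by
    intro μ u v hu hv
    have hμ0 : 0 ≤ μ := aux_nonneg dist_nonneg (hu i₀) (hr i₀)
    obtain ⟨γ, hγ⟩ := hX.1 u v
    set mid := γ ((1/2) * dist u v) with hmid
    set e := dist u v ^ 2 with he
    have he0 : 0 ≤ e := sq_nonneg _
    have hmq : ∀ i, dist (x i) mid ^ 2 ≤ μ^2 * r i ^2 - e/4 := by
      intro i
      have h1 := cat0_cn hX (x i) u v hγ (by norm_num : (0:ℝ) ≤ 1/2) (by norm_num)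
      have h2 : dist (x i) u ^2 ≤ (μ * r i)^2 :=
        pow_le_pow_left₀ dist_nonneg (hu i) 2
      have h3 : dist (x i) v ^2 ≤ (μ * r i)^2 :=
        pow_le_pow_left₀ dist_nonneg (hv i) 2
      have h4 : (μ * r i)^2 = μ^2 * r i ^2 := by ring
      rw [h4] at h2 h3
      linarith [h1]
    have harg : e / (4 * R^2) ≤ μ^2 := by
      rw [div_le_iff₀ hR2]
      have h1 := hmq i₀
      have h2 : r i₀ ^2 ≤ R^2 := pow_le_pow_left₀ (hr i₀).le (hrR i₀) 2
      have h3 := sq_nonneg (dist (x i₀) mid)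
      have h4 : μ^2 * r i₀ ^2 ≤ μ^2 * R^2 :=
        mul_le_mul_of_nonneg_left h2 (sq_nonneg μ)
      have h5 : μ^2 * (4*R^2) = 4*(μ^2*R^2) := by ring
      linarith
    set ν := Real.sqrt (μ^2 - e/(4*R^2)) with hνdef
    have hν2 : ν^2 = μ^2 - e/(4*R^2) := Real.sq_sqrt (by linarith)
    have hν0 : 0 ≤ ν := Real.sqrt_nonneg _
    have hmidball : ∀ i, dist (x i) mid ≤ ν * r i := by
      intro i
      apply le_of_sq_le_sq' dist_nonneg (mul_nonneg hν0 (hr i).le)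
      have h1 := hmq i
      have h2 : e / (4*R^2) * r i ^2 ≤ e / 4 := by
        have h2a : r i ^2 ≤ R^2 := pow_le_pow_left₀ (hr i).le (hrR i) 2
        have h2b : e * r i ^2 ≤ e * R^2 := mul_le_mul_of_nonneg_left h2a he0
        rw [div_mul_eq_mul_div, div_le_div_iff₀ hR2 (by norm_num : (0:ℝ) < 4)]
        linarith
      have h3 : (ν * r i)^2 = μ^2*r i^2 - e/(4*R^2)*r i^2 := by
        rw [mul_pow, hν2]; ring
      linarith
    have hμ'ν : μ'^2 ≤ ν^2 := by
      rcases lt_or_ge 0 ν with hν | hν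
      · exact pow_le_pow_left₀ hμ'0 (hle ν ⟨hν, mid, (hmem _ _).mpr hmidball⟩) 2
      · have hν' : ν = 0 := le_antisymm hν hν0
        have hz : ∀ i, dist (x i) mid ≤ 0 := by
          intro i; have := hmidball i; rw [hν'] at this; linarith [this]
        have hμ'z : μ' ≤ 0 := by
          by_contra hc
          push_neg at hc
          have hhalf : μ'/2 ∈ S := by
            refine ⟨by linarith, mid, (hmem _ _).mpr fun i => ?_⟩
            have := mul_pos (by linarith : (0:ℝ) < μ'/2) (hr i)
            linarith [hz i]
          have := hle _ hhalf; linarith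
        have hμ'eq : μ' = 0 := le_antisymm hμ'z hμ'0
        rw [hμ'eq]
        norm_num [sq_nonneg ν]
    rw [hν2] at hμ'ν
    have := (div_le_iff₀ hR2).mp (by linarith : e/(4*R^2) ≤ μ^2 - μ'^2)
    linarith
  -- minimizing sequence
  have hseq : ∀ k : ℕ, ∃ z : X, ∀ i, dist (x i) z ≤ (μ' + 1/((k:ℝ)+1)) * r i := by
    intro k
    have hpos : μ' < μ' + 1/((k:ℝ)+1) := by
      have : (0:ℝ) < 1/((k:ℝ)+1) := by positivity
      linarith
    obtain ⟨-, z, hz⟩ := h_gt _ hpos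
    exact ⟨z, (hmem _ _).mp hz⟩
  choose y hy using hseq
  have hmono : ∀ {j k : ℕ}, k ≤ j → ∀ i, dist (x i) (y j) ≤ (μ' + 1/((k:ℝ)+1)) * r i := by
    intro j k hkj i
    have h1 := hy j i
    have h2 : 1/((j:ℝ)+1) ≤ 1/((k:ℝ)+1) := by
      apply one_div_le_one_div_of_le (by positivity)
      have : (k:ℝ) ≤ (j:ℝ) := Nat.cast_le.mpr hkj
      linarith
    have h3 : (μ' + 1/((j:ℝ)+1)) * r i ≤ (μ' + 1/((k:ℝ)+1)) * r i :=
      mul_le_mul_of_nonneg_right (by linarith) (hr i).le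
    linarith
  have hcauchy : CauchySeq y := by
    rw [Metric.cauchySeq_iff']
    intro ε hε
    set C := 4 * R^2 * (2*μ' + 1) with hCdef
    have hC0 : 0 ≤ C := by
      have h0 : (0:ℝ) ≤ R^2 := sq_nonneg R
      have h1 : C = 4*R^2*(2*μ'+1) := hCdef
      nlinarith
    obtain ⟨N, hN⟩ := exists_nat_gt (C / ε^2)
    refine ⟨N, fun k hk => ?_⟩
    have hdb := h_diam (μ' + 1/((N:ℝ)+1)) (y k) (y N) (hmono hk) (hmono le_rfl)
    set u := 1/((N:ℝ)+1) with hudef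
    have hu0 : 0 < u := by positivity
    have hu1 : u ≤ 1 := by
      rw [hudef, div_le_one (by positivity)]
      linarith [Nat.cast_nonneg (α := ℝ) N]
    have hNε : C < ((N:ℝ)) * ε^2 := (div_lt_iff₀ (pow_pos hε 2)).mp hN
    have hNu : C * u < ε^2 := by
      have huN : u * ((N:ℝ)+1) = 1 := by rw [hudef]; field_simp
      have h1 : C < ε^2 * ((N:ℝ)+1) := by
        have := pow_pos hε 2
        have h1a : ((N:ℝ)) * ε^2 ≤ ε^2 * ((N:ℝ)+1) := by nlinarith
        linarith
      calc C * u < ε^2 * ((N:ℝ)+1) * u := mul_lt_mul_of_pos_right h1 hu0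
        _ = ε^2 * (u * ((N:ℝ)+1)) := by ring
        _ = ε^2 := by rw [huN]; ring
    have hq : dist (y k) (y N) ^2 < ε^2 := by
      have hexp : (μ' + u)^2 - μ'^2 = u*(2*μ' + u) := by ring
      have h2 : u*(2*μ'+u) ≤ u*(2*μ'+1) := mul_le_mul_of_nonneg_left (by linarith) hu0.le
      have h3 : 4*R^2*(u*(2*μ'+u)) ≤ 4*R^2*(u*(2*μ'+1)) :=
        mul_le_mul_of_nonneg_left h2 hR2.le
      have h4 : 4*R^2*(u*(2*μ'+1)) = C * u := by rw [hCdef]; ring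
      rw [hexp] at hdb
      linarith
    exact lt_of_sq_lt_sq' dist_nonneg hε.le hq
  obtain ⟨m, hm⟩ := cauchySeq_tendsto_of_complete hcauchy
  have hmball : ∀ i, dist (x i) m ≤ μ' * r i := by
    intro i
    have hdist : Filter.Tendsto (fun k => dist (x i) (y k)) Filter.atTop (nhds (dist (x i) m)) :=
      Filter.Tendsto.dist tendsto_const_nhds hm
    have h1 : Filter.Tendsto (fun k : ℕ => 1/((k:ℝ)+1)) Filter.atTop (nhds 0) :=
      tendsto_one_div_add_atTop_nhds_zero_nat
    have hrhs : Filter.Tendsto (fun k : ℕ => (μ' + 1/((k:ℝ)+1)) * r i) Filter.atTop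
        (nhds (μ' * r i)) := by
      have := (Filter.Tendsto.add (tendsto_const_nhds (x := μ')) h1).mul_const (r i)
      simpa using this
    exact le_of_tendsto_of_tendsto' hdist hrhs fun k => hy k i
  have huniq : ∀ z : X, (∀ i, dist (x i) z ≤ μ' * r i) → z = m := by
    intro z hz
    have h1 := h_diam μ' z m hz hmball
    have h0 : 4*R^2*(μ'^2 - μ'^2) = 0 := by ring
    exact dist_eq_zero.mp (eq_zero_of_sq_nonpos dist_nonneg (by linarith))
  have hset : (⋂ i, Metric.closedBall (x i) (μ' * r i)) = {m} := by
    ext z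
    rw [hmem μ' z, Set.mem_singleton_iff]
    constructor
    · exact huniq z
    · rintro rfl; exact hmball
  refine ⟨hS_ne, m, hset, ?_⟩
  -- convex hull part
  set F : Set X := {p : X | ∃ i, p = x i ∧ dist m (x i) = μ' * r i} with hFdef
  set H : Set X := geodConvexHull F with hHdef
  have hHconv : GeodesicConvex H := by
    intro a ha b hb γ hγ t ht
    rw [hHdef, geodConvexHull] at *
    intro C hC
    exact hC.1 a (ha C hC) b (hb C hC) γ hγ t ht
  have hFsubH : F ⊆ H := by
    intro p hp
    rw [hHdef, geodConvexHull]
    exact fun C hC => hC.2 hp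
  have hFne : ∃ i, dist m (x i) = μ' * r i := by
    by_contra hcon
    push_neg at hcon
    have hlt : ∀ i, dist m (x i) < μ' * r i := fun i =>
      lt_of_le_of_ne (by rw [dist_comm]; exact hmball i) (hcon i)
    have hμ'pos : 0 < μ' := by
      rcases hμ'0.lt_or_eq with h | h
      · exact h
      · exfalso
        have h1 := hlt i₀
        rw [← h, zero_mul] at h1
        linarith [dist_nonneg (x := m) (y := x i₀)]
    set μ₂ := max (μ'/2) (Finset.univ.sup' Finset.univ_nonempty
      (fun i => dist m (x i) / r i)) with hμ₂def
    have hμ₂pos : 0 < μ₂ := lt_max_of_lt_left (by linarith)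
    have hμ₂lt : μ₂ < μ' := by
      apply max_lt (by linarith)
      rw [Finset.sup'_lt_iff]
      intro i _
      rw [div_lt_iff₀ (hr i)]
      exact hlt i
    have hμ₂S : μ₂ ∈ S := by
      refine ⟨hμ₂pos, m, (hmem _ _).mpr fun i => ?_⟩
      have h1 : dist m (x i) / r i ≤ μ₂ :=
        le_max_of_le_right (Finset.le_sup' (fun i => dist m (x i) / r i) (Finset.mem_univ i))
      rw [div_le_iff₀ (hr i)] at h1
      rw [dist_comm] at h1
      linarith
    linarith [hle μ₂ hμ₂S]
  obtain ⟨i₁, hi₁⟩ := hFne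
  have hHne : H.Nonempty := ⟨x i₁, hFsubH ⟨i₁, rfl, hi₁⟩⟩
  rcases hμ'0.lt_or_eq with hμ'pos | hμ'zero
  swap
  · -- μ' = 0 : m = x i₁ ∈ F
    have h1 : dist m (x i₁) = 0 := by rw [hi₁, ← hμ'zero, zero_mul]
    exact subset_closure (hFsubH ⟨i₁, dist_eq_zero.mp h1, hi₁⟩)
  · by_contra hmc
    set d := Metric.infDist m H with hddef
    have hd0 : 0 < d := by
      rcases (Metric.infDist_nonneg (x := m) (s := H)).lt_or_eq with h | h
      · exact h
      · exact absurd ((Metric.mem_closure_iff_infDist_zero hHne).mpr h.symm) hmc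
    set B := 1 + Finset.univ.sup' Finset.univ_nonempty (fun i => dist m (x i)) with hBdef
    have hsup0 : 0 ≤ Finset.univ.sup' Finset.univ_nonempty (fun i => dist m (x i)) :=
      le_trans dist_nonneg (Finset.le_sup' (fun i => dist m (x i)) (Finset.mem_univ i₀))
    have hB0 : 0 < B := by rw [hBdef]; linarith
    have hB2 : (0:ℝ) < 4 * B^2 := mul_pos (by norm_num) (pow_pos hB0 2)
    have hBb : ∀ i, dist m (x i) ≤ B := fun i => by
      have := Finset.le_sup' (fun i => dist m (x i)) (Finset.mem_univ i)
      rw [hBdef]; linarith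
    set σ := min (1/2 : ℝ) (d^2/(4*B^2)) with hσdef
    have hσ0 : 0 < σ := lt_min (by norm_num) (div_pos (pow_pos hd0 2) hB2)
    have hσh : σ ≤ 1/2 := min_le_left _ _
    have h4σB : σ * (4*B^2) ≤ d^2 := by
      have h1 : σ ≤ d^2/(4*B^2) := min_le_right _ _
      rw [le_div_iff₀ hB2] at h1
      exact h1
    set ε := σ * d^2 / 4 with hεdef
    have hε0 : 0 < ε := by
      rw [hεdef]
      exact div_pos (mul_pos hσ0 (pow_pos hd0 2)) (by norm_num)
    have hsqrt : d < Real.sqrt (d^2 + ε) := by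
      have h1 : d = Real.sqrt (d^2) := (Real.sqrt_sq hd0.le).symm
      nth_rewrite 1 [h1]
      exact Real.sqrt_lt_sqrt (sq_nonneg _) (by linarith)
    obtain ⟨p, hpH, hpd⟩ := (Metric.infDist_lt_iff hHne).mp (by rw [← hddef]; exact hsqrt)
    set Dmp := dist m p with hDdef
    have hDd : d ≤ Dmp := Metric.infDist_le_dist_of_mem hpH
    have hD0 : 0 < Dmp := lt_of_lt_of_le hd0 hDd
    have hDsq : Dmp^2 < d^2 + ε := by
      have h1 : Dmp^2 < Real.sqrt (d^2+ε) ^ 2 := sq_lt_sq_of_lt hD0.le hpd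
      rw [Real.sq_sqrt (by linarith [sq_nonneg d] : (0:ℝ) ≤ d^2 + ε)] at h1
      exact h1
    set g := Finset.univ.inf' Finset.univ_nonempty
      (fun i => if dist m (x i) = μ' * r i then 1 else μ' * r i - dist m (x i)) with hgdef
    have hg0 : 0 < g := by
      rw [hgdef, Finset.lt_inf'_iff]
      intro i _
      by_cases hi : dist m (x i) = μ' * r i
      · rw [if_pos hi]; norm_num
      · rw [if_neg hi]
        have h1 : dist m (x i) ≤ μ' * r i := by rw [dist_comm]; exact hmball i
        exact sub_pos.mpr (lt_of_le_of_ne h1 hi)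
    set s := min 1 (g/(Dmp+1)) with hsdef
    have hs0 : 0 < s := lt_min one_pos (div_pos hg0 (by linarith))
    have hs1 : s ≤ 1 := min_le_left _ _
    have hsDnn : 0 ≤ s * Dmp := mul_nonneg hs0.le hD0.le
    have hsDle : s * Dmp ≤ Dmp := by
      have := mul_le_mul_of_nonneg_right hs1 hD0.le
      linarith [this]
    obtain ⟨γm, hγm⟩ := hX.1 m p
    set z := γm (s * Dmp) with hzdef
    have hmz : dist m z = s * Dmp := by
      have h1 := hγm.2.2 0 ⟨le_rfl, dist_nonneg⟩ (s * Dmp) ⟨hsDnn, hsDle⟩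
      rw [hγm.1] at h1
      rw [hzdef, h1, abs_of_nonpos (by linarith : 0 - s * Dmp ≤ 0)]
      ring
    have hsD : s * Dmp < g := by
      have h1 : s ≤ g/(Dmp+1) := min_le_right _ _
      have h2 : s * (Dmp+1) ≤ g := (le_div_iff₀ (by linarith)).mp h1
      have heq : s * (Dmp+1) = s*Dmp + s := by ring
      linarith
    have hclaim : ∀ i, dist (x i) z < μ' * r i := by
      intro i
      by_cases hi : dist m (x i) = μ' * r i
      · -- i in F'
        obtain ⟨γp, hγp⟩ := hX.1 p (x i)
        set L := dist p (x i) with hLdef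
        set A := dist m (x i) with hAdef
        have hA0 : 0 ≤ A := dist_nonneg
        have hAB : A ≤ B := hBb i
        have hin : γp (σ * L) ∈ H := by
          apply hHconv p hpH (x i) (hFsubH ⟨i, rfl, hi⟩) γp hγp
          refine ⟨mul_nonneg hσ0.le dist_nonneg, ?_⟩
          rw [← hLdef]
          have hL0 : 0 ≤ L := dist_nonneg
          have := mul_le_mul_of_nonneg_right (by linarith : σ ≤ 1) hL0
          linarith [this]
        have h1 := cat0_cn hX m p (x i) hγp hσ0.le (by linarith)
        rw [← hLdef, ← hDdef, ← hAdef] at h1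
        have h2 : d ≤ dist m (γp (σ * L)) := Metric.infDist_le_dist_of_mem hin
        have h3 : d^2 ≤ dist m (γp (σ * L))^2 := pow_le_pow_left₀ hd0.le h2 2
        have hI : σ*(1-σ)*L^2 ≤ (1-σ)*Dmp^2 + σ*A^2 - d^2 := by linarith
        have hDsq' : Dmp^2 < d^2 + σ*d^2/4 := by rw [hεdef] at hDsq; linarith
        have hL2 : L^2 < A^2 := arith1 hσ0 hσh h4σB hd0 hA0 hAB hDsq' hI
        have h4 := cat0_cn hX (x i) m p hγm hs0.le hs1
        rw [← hDdef] at h4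
        have h5 : dist (x i) m = A := by rw [hAdef, dist_comm]
        have h6 : dist (x i) p = L := by rw [hLdef, dist_comm]
        rw [h5, h6] at h4
        have h7 : dist (x i) z ^2 < A^2 := by
          rw [hzdef]
          exact arith2 hs0 hs1 hL2 h4
        have h8 : dist (x i) z ^2 < (μ' * r i)^2 := by rw [← hi]; exact h7
        exact lt_of_sq_lt_sq' dist_nonneg (mul_nonneg hμ'0 (hr i).le) h8
      · -- i not in F'
        have h4 : dist m (x i) < μ' * r i :=
          lt_of_le_of_ne (by rw [dist_comm]; exact hmball i) hi
        have hgle : g ≤ μ' * r i - dist m (x i) := by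
          have h5 := Finset.inf'_le (b := i)
            (fun i => if dist m (x i) = μ' * r i then 1 else μ' * r i - dist m (x i))
            (Finset.mem_univ i)
          rw [if_neg hi] at h5
          rw [hgdef]; exact h5
        have h6 : dist (x i) z ≤ dist (x i) m + dist m z := dist_triangle _ _ _
        rw [hmz, dist_comm (x i) m] at h6
        linarith
    -- contradiction with μ' = inf
    set μ₂ := max (μ'/2) (Finset.univ.sup' Finset.univ_nonempty
      (fun i => dist (x i) z / r i)) with hμ₂def
    have hμ₂pos : 0 < μ₂ := lt_max_of_lt_left (by linarith)
    have hμ₂lt : μ₂ < μ' := by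
      apply max_lt (by linarith)
      rw [Finset.sup'_lt_iff]
      intro i _
      rw [div_lt_iff₀ (hr i)]
      exact hclaim i
    have hμ₂S : μ₂ ∈ S := by
      refine ⟨hμ₂pos, z, (hmem _ _).mpr fun i => ?_⟩
      have h1 : dist (x i) z / r i ≤ μ₂ :=
        le_max_of_le_right (Finset.le_sup' (fun i => dist (x i) z / r i) (Finset.mem_univ i))
      rw [div_le_iff₀ (hr i)] at h1
      exact h1
    linarith [hle μ₂ hμ₂S]
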